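/- Let f ∈ R = K[x_1,...,x_n] be a free divisor. Then f remains a free divisor when considered as an element of the larger polynomial ring R[x_{n+1},...,x_{n+m}] (the suspension of f is a free divisor). -/
import Mathlib


open MvPolynomial

/-- Squarefree transfers backwards along a ring equivalence. -/
lemma squarefree_of_ringEquiv {A B : Type*} [CommRing A] [CommRing B]
    (e : A ≃+* B) {x : A} (h : Squarefree (e x)) : Squarefree x := by
  intro y hy
  have : e y * e y ∣ e x := by
    rw [← map_mul]; exact map_dvd (e : A →+* B) hy
  have hu := h _ this
  have := hu.map (e.symm : B →+* A)
  simpa using this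

/-- `C a` is squarefree in `R[X]` when `a` is squarefree in the domain `R`. -/
lemma squarefree_polyC {R : Type*} [CommRing R] [IsDomain R] {a : R}
    (ha : Squarefree a) : Squarefree (Polynomial.C a) := by
  intro x hx
  obtain ⟨y, hy⟩ := hx
  have ha0 : a ≠ 0 := ha.ne_zero
  have hx0 : x ≠ 0 := by rintro rfl; simp at hy; exact ha0 (by simpa using hy)
  have hy0 : y ≠ 0 := by rintro rfl; rw [mul_zero] at hy; exact ha0 (by simpa using hy)
  have hdeg : x.natDegree = 0 ∧ y.natDegree = 0 := by
    have : (x * x * y).natDegree = 0 := by rw [← hy]; simp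
    rw [Polynomial.natDegree_mul (mul_ne_zero hx0 hx0) hy0,
      Polynomial.natDegree_mul hx0 hx0] at this
    omega
  obtain ⟨c, hc⟩ := Polynomial.natDegree_eq_zero.mp hdeg.1
  obtain ⟨d, hd⟩ := Polynomial.natDegree_eq_zero.mp hdeg.2
  have : c * c * d = a := by
    have := hy
    rw [← hc, ← hd, ← Polynomial.C_mul, ← Polynomial.C_mul] at this
    exact (Polynomial.C_injective this.symm)
  have hcu : IsUnit c := ha c ⟨d, this.symm⟩
  rw [← hc]
  exact hcu.map Polynomial.C

lemma finSuccEquiv_rename_succ {K : Type*} [CommRing K] {N : ℕ}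
    (p : MvPolynomial (Fin N) K) :
    finSuccEquiv K N (rename Fin.succ p) = Polynomial.C p := by
  induction p using MvPolynomial.induction_on with
  | C a => simp [finSuccEquiv_apply]
  | add p q hp hq => simp [hp, hq]
  | mul_X p i hp => simp [hp, finSuccEquiv_X_succ]

/-- adding one variable preserves squarefreeness -/
lemma squarefree_rename_succ {K : Type*} [Field K] {N : ℕ}
    {p : MvPolynomial (Fin N) K} (hp : Squarefree p) :
    Squarefree (rename Fin.succ p) := by
  apply squarefree_of_ringEquiv (finSuccEquiv K N).toRingEquiv
  rw [AlgEquiv.toRingEquiv_eq_coe]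
  show Squarefree (finSuccEquiv K N (rename Fin.succ p))
  rw [finSuccEquiv_rename_succ]
  exact squarefree_polyC hp

lemma squarefree_rename_castSucc {K : Type*} [Field K] {N : ℕ}
    {p : MvPolynomial (Fin N) K} (hp : Squarefree p) :
    Squarefree (rename Fin.castSucc p) := by
  have key : rename (Fin.castSucc (n := N)) p
      = (renameEquiv K ((finRotate (N+1)).symm)) (rename Fin.succ p) := by
    rw [renameEquiv_apply, rename_rename]
    have hfun : (⇑(finRotate (N+1)).symm) ∘ Fin.succ = (Fin.castSucc : Fin N → Fin (N+1)) := by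
      funext i
      rw [Function.comp_apply, Equiv.symm_apply_eq]
      show Fin.succ i = finRotate (N+1) ⟨i.1, Nat.lt_succ_of_lt i.isLt⟩
      rw [finRotate_of_lt i.isLt]
      exact Fin.ext rfl
    rw [hfun]
  apply squarefree_of_ringEquiv ((renameEquiv K ((finRotate (N+1)).symm)).toRingEquiv).symm
  have h2 : ((renameEquiv K ((finRotate (N+1)).symm)).toRingEquiv).symm (rename Fin.castSucc p)
      = rename Fin.succ p := by
    rw [key]
    simp only [AlgEquiv.toRingEquiv_eq_coe, AlgEquiv.toRingEquiv_symm, AlgEquiv.coe_ringEquiv]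
    exact (renameEquiv K ((finRotate (N+1)).symm)).symm_apply_apply _
  rw [h2]
  exact squarefree_rename_succ hp

lemma squarefree_rename_castAdd {K : Type*} [Field K] {n : ℕ} (m : ℕ)
    {p : MvPolynomial (Fin n) K} (hp : Squarefree p) :
    Squarefree (rename (Fin.castAdd m) p) := by
  induction m with
  | zero =>
      have hid : Squarefree (rename (id : Fin n → Fin n) p) := by rwa [rename_id]
      have e : (Fin.castAdd 0 : Fin n → Fin (n + 0)) = (id : Fin n → Fin n) := by
        funext i; exact Fin.ext rfl
      rw [e]; exact hid
  | succ m ih =>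
      have : (Fin.castAdd (m+1) : Fin n → Fin (n + (m+1)))
          = Fin.castSucc ∘ Fin.castAdd m := by
        funext i; exact Fin.ext rfl
      rw [this, ← rename_rename]
      exact squarefree_rename_castSucc ih

lemma pderiv_natAdd_rename_castAdd {K : Type*} [CommRing K] {n m : ℕ}
    (p : MvPolynomial (Fin n) K) (k : Fin m) :
    pderiv (Fin.natAdd n k) (rename (Fin.castAdd m) p) = 0 := by
  induction p using MvPolynomial.induction_on with
  | C a => simp
  | add p q hp hq => simp [hp, hq]
  | mul_X p i hp =>
      rw [map_mul, rename_X, Derivation.leibniz, hp]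
      have : Fin.natAdd n k ≠ Fin.castAdd m i := by
        intro h
        have hv : (n : ℕ) + (k : ℕ) = (i : ℕ) := congrArg Fin.val h
        have := i.isLt
        omega
      rw [pderiv_X]
      simp [Pi.single_apply, this.symm]

/-- a free divisor remains a free divisor in a larger polynomial
ring (the suspension of a free divisor is a free divisor). -/
theorem stmt_2 {K : Type*} [Field K] [CharZero K] {n m : ℕ}
    (f : MvPolynomial (Fin n) K)
    (hred : Squarefree f)
    (hfree : ∃ A : Matrix (Fin n) (Fin n) (MvPolynomial (Fin n) K),
      A.det = f ∧ ∀ j, (∑ i, pderiv i f * A i j) ∈ Ideal.span {f}) :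
    Squarefree (rename (Fin.castAdd m) f) ∧
    ∃ A : Matrix (Fin (n + m)) (Fin (n + m)) (MvPolynomial (Fin (n + m)) K),
      A.det = rename (Fin.castAdd m) f ∧
      ∀ j, (∑ i, pderiv i (rename (Fin.castAdd m) f) * A i j)
        ∈ Ideal.span {rename (Fin.castAdd m) f} := by
  classical
  obtain ⟨A, hdet, hA⟩ := hfree
  refine ⟨squarefree_rename_castAdd m hred, ?_⟩
  set ι : Fin n → Fin (n + m) := Fin.castAdd m with hι
  have hιinj : Function.Injective ι := Fin.castAdd_injective n m
  set φ : MvPolynomial (Fin n) K →ₐ[K] MvPolynomial (Fin (n + m)) K := rename ι with hφ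
  set g : MvPolynomial (Fin (n + m)) K := rename ι f with hg
  set B : Matrix (Fin (n + m)) (Fin (n + m)) (MvPolynomial (Fin (n + m)) K) :=
    Matrix.reindex finSumFinEquiv finSumFinEquiv
      (Matrix.fromBlocks (φ.mapMatrix A) 0 0 1) with hB
  have hBentry₁₁ : ∀ (i j : Fin n), B (Fin.castAdd m i) (Fin.castAdd m j) = φ (A i j) := by
    intro i j
    simp [hB, Matrix.reindex_apply, Matrix.submatrix_apply,
      finSumFinEquiv_symm_apply_castAdd]
  have hBentry₂₁ : ∀ (i : Fin m) (j : Fin n), B (Fin.natAdd n i) (Fin.castAdd m j) = 0 := by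
    intro i j
    simp [hB, Matrix.reindex_apply, Matrix.submatrix_apply,
      finSumFinEquiv_symm_apply_castAdd, finSumFinEquiv_symm_apply_natAdd]
  have hBentry₁₂ : ∀ (i : Fin n) (j : Fin m), B (Fin.castAdd m i) (Fin.natAdd n j) = 0 := by
    intro i j
    simp [hB, Matrix.reindex_apply, Matrix.submatrix_apply,
      finSumFinEquiv_symm_apply_castAdd, finSumFinEquiv_symm_apply_natAdd]
  have hpd_cast : ∀ i : Fin n, pderiv (Fin.castAdd m i) g = φ (pderiv i f) :=
    fun i => pderiv_rename hιinj i f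
  have hpd_nat : ∀ k : Fin m, pderiv (Fin.natAdd n k) g = 0 :=
    fun k => pderiv_natAdd_rename_castAdd f k
  refine ⟨B, ?_, ?_⟩
  · rw [hB, Matrix.det_reindex_self, Matrix.det_fromBlocks_zero₂₁, Matrix.det_one, mul_one,
      ← AlgHom.map_det, hdet]
  · intro j
    have hsplit : ∀ F : Fin (n + m) → MvPolynomial (Fin (n + m)) K,
        (∑ i, F i) = (∑ i : Fin n, F (Fin.castAdd m i)) + ∑ k : Fin m, F (Fin.natAdd n k) :=
      fun F => Fin.prod_univ_add (M := Multiplicative _) F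
    have hjcase := finSumFinEquiv.apply_symm_apply j
    rcases hs : finSumFinEquiv.symm j with j' | j'
    · -- j = castAdd m j'
      rw [hs, finSumFinEquiv_apply_left] at hjcase
      subst hjcase
      rw [hsplit]
      have h2 : (∑ k : Fin m, pderiv (Fin.natAdd n k) g * B (Fin.natAdd n k) (Fin.castAdd m j'))
          = 0 := by
        apply Finset.sum_eq_zero
        intro k _
        rw [hpd_nat k, zero_mul]
      rw [h2, add_zero]
      have h1 : (∑ i : Fin n, pderiv (Fin.castAdd m i) g * B (Fin.castAdd m i) (Fin.castAdd m j'))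
          = φ (∑ i, pderiv i f * A i j') := by
        rw [map_sum]
        apply Finset.sum_congr rfl
        intro i _
        rw [hpd_cast i, hBentry₁₁ i j', map_mul]
      rw [h1]
      rw [Ideal.mem_span_singleton]
      have := Ideal.mem_span_singleton.mp (hA j')
      exact map_dvd φ this
    · -- j = natAdd n j'
      rw [hs, finSumFinEquiv_apply_right] at hjcase
      subst hjcase
      rw [hsplit]
      have h1 : (∑ i : Fin n, pderiv (Fin.castAdd m i) g * B (Fin.castAdd m i) (Fin.natAdd n j'))
          = 0 := by
        apply Finset.sum_eq_zero
        intro i _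
        rw [hBentry₁₂ i j', mul_zero]
      have h2 : (∑ k : Fin m, pderiv (Fin.natAdd n k) g * B (Fin.natAdd n k) (Fin.natAdd n j'))
          = 0 := by
        apply Finset.sum_eq_zero
        intro k _
        rw [hpd_nat k, zero_mul]
      rw [h1, h2, add_zero]
      exact Ideal.zero_mem _
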